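/- The orthonormality of associated Hahn polynomials: for 0 ≤ n, m ≤ N, ∑_{x=0}^{N} q_n(x) q_m(x) w(x) = δ_{n,m}, where w(x) = 1/(x!(x+α)!(N+β−x)!(N−x)!) and q_n is the polynomial of degree n given by q_n(x) = ((−N−β)_n(−N)_n/(d_n n!)) ∑_{j=0}^{n} C(n,j)(−1)^j (−x)_j (n−2N−α−β−1)_j / ((−N−β)_j(−N)_j), with d_n² = (α+β+N+1−n)_{N+1} / ((α+β+2N+1−2n) n! (β+N−n)! (α+N−n)! (N−n)!). -/

import Mathlib

open Finset

/-- The Pochhammer symbol `(a)_n = a(a+1)⋯(a+n-1)` for a real argument. -/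
noncomputable def poch (a : ℝ) (n : ℕ) : ℝ := ∏ i ∈ Finset.range n, (a + i)

/-- The Hahn weight `w^{(α,β)}_N(x) = 1/(x!(x+α)!(N+β-x)!(N-x)!)` on `{0,…,N}`. -/
noncomputable def hahnWeight (α β N x : ℕ) : ℝ :=
  ((Nat.factorial x * Nat.factorial (x + α) * Nat.factorial (N + β - x) *
      Nat.factorial (N - x) : ℕ) : ℝ)⁻¹

/-- The squared normalization constant `d_{n,N}^{(α,β)}²`. -/
noncomputable def hahnD2 (α β N n : ℕ) : ℝ :=
  poch ((α : ℝ) + β + N + 1 - n) (N + 1) /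
    (((α : ℝ) + β + 2 * N + 1 - 2 * n) * (Nat.factorial n : ℝ) *
      (Nat.factorial (β + N - n) : ℝ) * (Nat.factorial (α + N - n) : ℝ) *
      (Nat.factorial (N - n) : ℝ))

/-- The normalized associated Hahn polynomial `q^{(α,β)}_{n,N}(x)`. -/
noncomputable def hahnQ (α β N n : ℕ) (x : ℕ) : ℝ :=
  poch (-(N : ℝ) - β) n * poch (-(N : ℝ)) n /
      (Real.sqrt (hahnD2 α β N n) * (Nat.factorial n : ℝ)) *
    ∑ j ∈ Finset.range (n + 1),
      (n.choose j : ℝ) * (-1 : ℝ) ^ j * poch (-(x : ℝ)) j *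
          poch ((n : ℝ) - 2 * N - α - β - 1) j /
        (poch (-(N : ℝ) - β) j * poch (-(N : ℝ)) j)

noncomputable def ff (t : ℝ) (j : ℕ) : ℝ := ∏ i ∈ Finset.range j, (t - i)

lemma poch_zero (a : ℝ) : poch a 0 = 1 := by simp [poch]

lemma poch_succ (a : ℝ) (n : ℕ) : poch a (n+1) = poch a n * (a + n) :=
  Finset.prod_range_succ _ _

lemma poch_succ_left (a : ℝ) (n : ℕ) : poch a (n+1) = a * poch (a+1) n := by
  rw [poch, Finset.prod_range_succ', poch]
  rw [mul_comm]
  congr 1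
  · ring
  · exact Finset.prod_congr rfl (fun i _ => by push_cast; ring)

lemma poch_add (a : ℝ) (m k : ℕ) : poch a (m+k) = poch a m * poch (a+m) k := by
  rw [poch, poch, poch, Finset.prod_range_add]
  congr 1
  exact Finset.prod_congr rfl (fun i _ => by push_cast; ring)

lemma ff_zero (t : ℝ) : ff t 0 = 1 := by simp [ff]

lemma ff_succ (t : ℝ) (j : ℕ) : ff t (j+1) = ff t j * (t - j) :=
  Finset.prod_range_succ _ _

lemma poch_neg (t : ℝ) (j : ℕ) : poch (-t) j = (-1)^j * ff t j := by
  induction j with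
  | zero => simp [poch, ff]
  | succ j ih => rw [poch_succ, ff_succ, ih]; push_cast; ring

lemma ff_eq_poch_neg (t : ℝ) (j : ℕ) : ff t j = (-1)^j * poch (-t) j := by
  rw [poch_neg]; rw [← mul_assoc, ← mul_pow]; simp

lemma ff_shift_up (t : ℝ) (j : ℕ) : ff (t+1) (j+1) = (t+1) * ff t j := by
  simp only [ff]
  rw [Finset.prod_range_succ']
  rw [show (∏ i ∈ Finset.range j, (t + 1 - ((i+1:ℕ):ℝ))) =
      ∏ i ∈ Finset.range j, (t - (i:ℕ)) from
    Finset.prod_congr rfl fun i _ => by push_cast; ring]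
  push_cast
  ring

lemma ff_shift_down (t : ℝ) (j : ℕ) : t * ff (t-1) (j+1) = ff t (j+2) := by
  simp only [ff]
  conv_rhs => rw [Finset.prod_range_succ']
  rw [show (∏ i ∈ Finset.range (j+1), (t - ((i+1:ℕ):ℝ))) =
      ∏ i ∈ Finset.range (j+1), (t - 1 - (i:ℕ)) from
    Finset.prod_congr rfl fun i _ => by push_cast; ring]
  push_cast
  ring


lemma chuV : ∀ (n : ℕ) (b c : ℝ),
    ∑ j ∈ Finset.range (n+1), (n.choose j : ℝ) * (-1)^j * poch b j * poch (c+j) (n-j)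
      = poch (c-b) n := by
  intro n
  induction n with
  | zero => intro b c; simp [poch_zero]
  | succ n ih =>
    intro b c
    have h5 : ∑ j ∈ Finset.range (n+2),
        (n.choose j : ℝ) * (-1)^j * poch b j * poch (c+(j:ℕ)) (n+1-j)
        = (c+(n:ℝ)) * ∑ j ∈ Finset.range (n+1),
            (n.choose j : ℝ) * (-1)^j * poch b j * poch (c+(j:ℕ)) (n-j) := by
      rw [Finset.sum_range_succ]
      have hz : (n.choose (n+1) : ℝ) = 0 := by rw [Nat.choose_succ_self]; norm_num
      rw [hz]
      simp only [zero_mul, add_zero, mul_zero]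
      rw [Finset.mul_sum]
      refine Finset.sum_congr rfl fun j hj => ?_
      have hj' : j ≤ n := by simpa [Nat.lt_succ_iff] using hj
      have h4 : n + 1 - j = (n - j) + 1 := by omega
      rw [h4, poch_succ]
      have h5' : (c + (j:ℕ) + ((n-j:ℕ):ℝ)) = c + n := by
        rw [Nat.cast_sub hj']; ring
      rw [h5']
      ring
    have h6 : ∑ j ∈ Finset.range (n+2),
        (n.choose j : ℝ) * (-1)^j * poch b j * poch (c+(j:ℕ)) (n+1-j)
        = (∑ j ∈ Finset.range (n+1),
            (n.choose (j+1) : ℝ) * (-1)^(j+1) * poch b (j+1) * poch (c+((j+1:ℕ))) (n-j))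
          + poch c (n+1) := by
      rw [Finset.sum_range_succ']
      congr 1
      · refine Finset.sum_congr rfl fun j hj => ?_
        have h3 : n + 1 - (j+1) = n - j := by omega
        rw [h3]
      · simp [poch_zero]
    have hA : ∑ j ∈ Finset.range (n+1),
        (n.choose (j+1) : ℝ) * (-1)^(j+1) * poch b (j+1) * poch (c+((j+1:ℕ))) (n-j)
        = (c+(n:ℝ)) * poch (c-b) n - poch c (n+1) := by
      have ihn := ih b c
      rw [ihn] at h5
      linarith [h5, h6]
    have hsplit : ∀ j ∈ Finset.range (n+1),
        ((n+1).choose (j+1) : ℝ) * (-1)^(j+1) * poch b (j+1) * poch (c+((j+1:ℕ))) (n+1-(j+1))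
        = (n.choose (j+1) : ℝ) * (-1)^(j+1) * poch b (j+1) * poch (c+((j+1:ℕ))) (n-j)
          + (-b) * ((n.choose j : ℝ) * (-1)^j * poch (b+1) j * poch ((c+1)+j) (n-j)) := by
      intro j hj
      rw [Nat.choose_succ_succ]
      have h1 : poch b (j+1) = b * poch (b+1) j := poch_succ_left b j
      have h2 : ((c:ℝ)+((j+1:ℕ):ℝ)) = (c+1)+(j:ℕ) := by push_cast; ring
      have h3 : n + 1 - (j+1) = n - j := by omega
      rw [h3, h2, h1]
      push_cast
      ring
    rw [Finset.sum_range_succ']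
    rw [Finset.sum_congr rfl hsplit, Finset.sum_add_distrib, ← Finset.mul_sum, ih, hA]
    have hg0 : ((n+1).choose 0 : ℝ) * (-1)^0 * poch b 0 * poch (c+((0:ℕ):ℝ)) (n+1-0)
        = poch c (n+1) := by
      simp [poch_zero]
    rw [hg0, poch_succ (c-b) n]
    have h7 : poch ((c+1)-(b+1)) n = poch (c-b) n := by norm_num
    rw [h7]
    ring

lemma chuV_div (n : ℕ) (b c : ℝ) (hc : ∀ j, j ≤ n → poch c j ≠ 0) :
    ∑ j ∈ Finset.range (n+1), (n.choose j : ℝ) * (-1)^j * poch b j / poch c j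
      = poch (c-b) n / poch c n := by
  rw [eq_div_iff (hc n le_rfl), Finset.sum_mul, ← chuV n b c]
  refine Finset.sum_congr rfl fun j hj => ?_
  have hj' : j ≤ n := by simpa [Nat.lt_succ_iff] using hj
  have h1 : poch c n = poch c j * poch (c+j) (n-j) := by
    rw [← poch_add]
    congr 1
    omega
  rw [h1]
  field_simp [hc j hj']


noncomputable def hsig (α : ℕ) (t : ℝ) : ℝ := t * (t + α)
noncomputable def htau (β N : ℕ) (t : ℝ) : ℝ := ((N:ℝ) - t) * ((N:ℝ) + β - t)
noncomputable def hC (α β N : ℕ) : ℝ := 2*(N:ℝ) + α + β + 1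
noncomputable def lam (α β N k : ℕ) : ℝ := (k:ℝ) * ((k:ℝ) - hC α β N)
noncomputable def Bco (β N k : ℕ) : ℝ := (k:ℝ) * ((N:ℝ) + 1 - k) * ((N:ℝ) + β + 1 - k)
noncomputable def cf (α β N n j : ℕ) : ℝ :=
  (n.choose j : ℝ) * poch ((n : ℝ) - 2 * N - α - β - 1) j /
    (poch (-(N : ℝ) - β) j * poch (-(N : ℝ)) j)
noncomputable def PP (α β N n : ℕ) (t : ℝ) : ℝ :=
  ∑ j ∈ Finset.range (n+1), cf α β N n j * ff t j

lemma pearson (α β N x : ℕ) (hx : x + 1 ≤ N) :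
    hahnWeight α β N (x+1) * hsig α ((x:ℝ)+1)
      = hahnWeight α β N x * htau β N (x:ℝ) := by
  obtain ⟨K, rfl⟩ : ∃ K, N = x + 1 + K := ⟨N - (x+1), by omega⟩
  unfold hahnWeight hsig htau
  have e1 : x + 1 + K + β - (x+1) = K + β := by omega
  have e2 : x + 1 + K - (x+1) = K := by omega
  have e3 : x + 1 + K + β - x = (K + β) + 1 := by omega
  have e4 : x + 1 + K - x = K + 1 := by omega
  rw [e1, e2, e3, e4]
  have e5 : x + 1 + α = (x + α) + 1 := by omega
  rw [e5]
  simp only [Nat.factorial_succ]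
  have h1 : ∀ r : ℕ, ((r.factorial : ℕ) : ℝ) ≠ 0 := fun r => by
    exact_mod_cast r.factorial_ne_zero
  push_cast
  rw [mul_inv, mul_inv, mul_inv, mul_inv, mul_inv, mul_inv]
  field_simp
  ring

lemma selfadj (α β N : ℕ) (f g : ℝ → ℝ) :
    ∑ x ∈ Finset.range (N+1), hahnWeight α β N x *
        (hsig α x * f ((x:ℝ)-1) + htau β N x * f ((x:ℝ)+1)
          - (hsig α x + htau β N x) * f x) * g x
    = ∑ x ∈ Finset.range (N+1), hahnWeight α β N x *
        (hsig α x * g ((x:ℝ)-1) + htau β N x * g ((x:ℝ)+1)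
          - (hsig α x + htau β N x) * g x) * f x := by
  have key : ∀ u v : ℝ → ℝ,
      ∑ x ∈ Finset.range (N+1), hahnWeight α β N x *
        (hsig α x * u ((x:ℝ)-1) + htau β N x * u ((x:ℝ)+1)
          - (hsig α x + htau β N x) * u x) * v x
      = (∑ x ∈ Finset.range N, hahnWeight α β N x * htau β N x *
            (u x * v ((x:ℝ)+1) + u ((x:ℝ)+1) * v x))
        - ∑ x ∈ Finset.range (N+1), hahnWeight α β N x *
            (hsig α x + htau β N x) * u x * v x := by
    intro u v
    have expand : ∀ x ∈ Finset.range (N+1), hahnWeight α β N x *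
        (hsig α x * u ((x:ℝ)-1) + htau β N x * u ((x:ℝ)+1)
          - (hsig α x + htau β N x) * u x) * v x
        = hahnWeight α β N x * hsig α x * u ((x:ℝ)-1) * v x
          + hahnWeight α β N x * htau β N x * u ((x:ℝ)+1) * v x
          - hahnWeight α β N x * (hsig α x + htau β N x) * u x * v x := by
      intro x _; ring
    rw [Finset.sum_congr rfl expand, Finset.sum_sub_distrib, Finset.sum_add_distrib]
    have hS1 : ∑ x ∈ Finset.range (N+1),
        hahnWeight α β N x * hsig α x * u ((x:ℝ)-1) * v x
        = ∑ x ∈ Finset.range N,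
            hahnWeight α β N x * htau β N x * (u x * v ((x:ℝ)+1)) := by
      rw [Finset.sum_range_succ']
      have h0 : hahnWeight α β N 0 * hsig α ((0:ℕ):ℝ) * u (((0:ℕ):ℝ)-1) * v ((0:ℕ):ℝ) = 0 := by
        simp [hsig]
      rw [h0, add_zero]
      refine Finset.sum_congr rfl fun x hx => ?_
      have hx' : x + 1 ≤ N := by simpa [Nat.lt_succ_iff, Nat.succ_le_iff] using hx
      have hp := pearson α β N x hx'
      have harg : ((x+1:ℕ):ℝ) - 1 = (x:ℝ) := by push_cast; ring
      have harg2 : ((x+1:ℕ):ℝ) = (x:ℝ)+1 := by push_cast; ring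
      rw [harg, harg2]
      calc hahnWeight α β N (x+1) * hsig α ((x:ℝ)+1) * u x * v ((x:ℝ)+1)
          = (hahnWeight α β N (x+1) * hsig α ((x:ℝ)+1)) * (u x * v ((x:ℝ)+1)) := by ring
        _ = (hahnWeight α β N x * htau β N x) * (u x * v ((x:ℝ)+1)) := by rw [hp]
        _ = hahnWeight α β N x * htau β N x * (u x * v ((x:ℝ)+1)) := by ring
    have hS2 : ∑ x ∈ Finset.range (N+1),
        hahnWeight α β N x * htau β N x * u ((x:ℝ)+1) * v x
        = ∑ x ∈ Finset.range N,
            hahnWeight α β N x * htau β N x * (u ((x:ℝ)+1) * v x) := by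
      rw [Finset.sum_range_succ]
      have hN0 : htau β N ((N:ℕ):ℝ) = 0 := by unfold htau; simp
      rw [hN0]
      simp only [mul_zero, zero_mul, add_zero]
      exact Finset.sum_congr rfl fun x hx => by ring
    rw [hS1, hS2, ← Finset.sum_add_distrib]
    congr 1
    refine Finset.sum_congr rfl fun x hx => ?_
    ring
  rw [key f g, key g f]
  have e1 : (∑ x ∈ Finset.range N, hahnWeight α β N x * htau β N x *
        (f x * g ((x:ℝ)+1) + f ((x:ℝ)+1) * g x))
      = ∑ x ∈ Finset.range N, hahnWeight α β N x * htau β N x *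
        (g x * f ((x:ℝ)+1) + g ((x:ℝ)+1) * f x) :=
    Finset.sum_congr rfl fun x _ => by ring
  have e2 : (∑ x ∈ Finset.range (N+1), hahnWeight α β N x *
        (hsig α x + htau β N x) * f x * g x)
      = ∑ x ∈ Finset.range (N+1), hahnWeight α β N x *
        (hsig α x + htau β N x) * g x * f x :=
    Finset.sum_congr rfl fun x _ => by ring
  rw [e1, e2]

lemma Lff (α β N : ℕ) (j : ℕ) (t : ℝ) :
    hsig α t * ff (t-1) j + htau β N t * ff (t+1) j - (hsig α t + htau β N t) * ff t j
      = lam α β N j * ff t j + Bco β N j * ff t (j-1) := by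
  cases j with
  | zero =>
    simp only [ff, Finset.range_zero, Finset.prod_empty, lam, Bco, Nat.cast_zero]
    norm_num
  | succ j =>
    have h1 : ff (t-1) (j+1) * t = ff t j * ((t-j) * (t-j-1)) := by
      rw [mul_comm, ff_shift_down]
      rw [show j+2 = (j+1)+1 from rfl, ff_succ, ff_succ]
      push_cast
      ring
    simp only [Nat.add_sub_cancel]
    rw [ff_shift_up t j, ff_succ t j]
    unfold hsig htau lam Bco hC
    push_cast
    linear_combination (t + (α:ℝ)) * h1


lemma poch_ne_zero_neg (A : ℕ) (b : ℝ) (hb : 0 ≤ b) {j : ℕ} (hj : j ≤ A) :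
    poch (-(A:ℝ) - b) j ≠ 0 := by
  rw [poch]
  apply Finset.prod_ne_zero_iff.mpr
  intro i hi
  have hi' : (i:ℝ) < (A:ℝ) := by
    exact_mod_cast lt_of_lt_of_le (Finset.mem_range.mp hi) hj
  intro h
  nlinarith

lemma poch_neM_ne (N : ℕ) {j : ℕ} (hj : j ≤ N) : poch (-(N:ℝ)) j ≠ 0 := by
  have := poch_ne_zero_neg N 0 le_rfl hj
  simpa using this

lemma poch_neB_ne (N β : ℕ) {j : ℕ} (hj : j ≤ N) : poch (-(N:ℝ) - β) j ≠ 0 :=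
  poch_ne_zero_neg N β (by positivity) hj

lemma cf_rec (α β N n : ℕ) (hn : n ≤ N) {j : ℕ} (hj : j < n) :
    cf α β N n (j+1) * Bco β N (j+1) = cf α β N n j * (lam α β N n - lam α β N j) := by
  have hjN : j < N := lt_of_lt_of_le hj hn
  have hQ1 : poch (-(N:ℝ) - β) j ≠ 0 := poch_neB_ne N β (le_of_lt hjN)
  have hQ2 : poch (-(N:ℝ)) j ≠ 0 := poch_neM_ne N (le_of_lt hjN)
  have hf1 : (-(N:ℝ) - β + j) ≠ 0 := by
    have : (j:ℝ) < (N:ℝ) := by exact_mod_cast hjN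
    have hbe : (0:ℝ) ≤ β := by positivity
    intro h; nlinarith
  have hf2 : (-(N:ℝ) + j) ≠ 0 := by
    have : (j:ℝ) < (N:ℝ) := by exact_mod_cast hjN
    intro h; nlinarith
  have hch : ((n.choose (j+1)):ℝ) = (n.choose j : ℝ) * ((n:ℝ) - j) / ((j:ℝ)+1) := by
    have h := Nat.choose_succ_right_eq n j
    have hsub : ((n - j:ℕ):ℝ) = (n:ℝ) - (j:ℝ) := by
      rw [Nat.cast_sub (le_of_lt hj)]
    have h' : ((n.choose (j+1)):ℝ) * ((j:ℝ)+1) = (n.choose j : ℝ) * ((n:ℝ) - j) := by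
      rw [← hsub]
      exact_mod_cast congrArg (fun z : ℕ => (z:ℝ)) h
    field_simp
    linarith [h']
  unfold cf Bco lam hC
  rw [poch_succ, poch_succ, poch_succ, hch]
  push_cast
  field_simp
  ring


lemma eigenPP (α β N n : ℕ) (hn : n ≤ N) (t : ℝ) :
    hsig α t * PP α β N n (t-1) + htau β N t * PP α β N n (t+1)
      - (hsig α t + htau β N t) * PP α β N n t = lam α β N n * PP α β N n t := by
  rw [← sub_eq_zero]
  unfold PP
  simp only [Finset.mul_sum]
  rw [← Finset.sum_add_distrib, ← Finset.sum_sub_distrib, ← Finset.sum_sub_distrib]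
  have step1 : ∀ j ∈ Finset.range (n+1),
      (hsig α t * (cf α β N n j * ff (t-1) j) + htau β N t * (cf α β N n j * ff (t+1) j)
        - (hsig α t + htau β N t) * (cf α β N n j * ff t j))
        - lam α β N n * (cf α β N n j * ff t j)
      = cf α β N n j * (lam α β N j - lam α β N n) * ff t j
        + cf α β N n j * Bco β N j * ff t (j-1) := by
    intro j _
    linear_combination cf α β N n j * Lff α β N j t
  rw [Finset.sum_congr rfl step1, Finset.sum_add_distrib]
  have h1 : ∑ j ∈ Finset.range (n+1), cf α β N n j * (lam α β N j - lam α β N n) * ff t j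
      = ∑ j ∈ Finset.range n, cf α β N n j * (lam α β N j - lam α β N n) * ff t j := by
    rw [Finset.sum_range_succ]
    simp
  have h2 : ∑ j ∈ Finset.range (n+1), cf α β N n j * Bco β N j * ff t (j-1)
      = ∑ j ∈ Finset.range n, cf α β N n (j+1) * Bco β N (j+1) * ff t j := by
    rw [Finset.sum_range_succ']
    have hb0 : Bco β N 0 = 0 := by simp [Bco]
    rw [hb0]
    simp only [Nat.add_sub_cancel, mul_zero, zero_mul, add_zero]
  rw [h1, h2, ← Finset.sum_add_distrib]
  apply Finset.sum_eq_zero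
  intro j hj
  have hrec := cf_rec α β N n hn (Finset.mem_range.mp hj)
  linear_combination ff t j * hrec


lemma ff_nat_eval (A : ℕ) : ∀ k, k ≤ A →
    ff ((A:ℕ):ℝ) k * (((A-k).factorial : ℕ) : ℝ) = ((A.factorial : ℕ) : ℝ) := by
  intro k
  induction k with
  | zero => intro _; simp [ff]
  | succ k ih =>
    intro hk
    have hk' : k ≤ A := by omega
    rw [ff_succ]
    have e1 : A - k = (A - (k+1)) + 1 := by omega
    have e2 : ((A:ℝ) - k) * (((A-(k+1)).factorial : ℕ) : ℝ)
        = (((A-k).factorial : ℕ) : ℝ) := by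
      rw [e1, Nat.factorial_succ]
      push_cast [Nat.cast_sub hk']
      have : ((A - (k+1) : ℕ) : ℝ) = (A:ℝ) - (k+1) := by
        rw [Nat.cast_sub hk]; push_cast; ring
      rw [this]
      ring
    calc ff ((A:ℕ):ℝ) k * ((A:ℝ) - k) * (((A-(k+1)).factorial : ℕ) : ℝ)
        = ff ((A:ℕ):ℝ) k * (((A-k).factorial : ℕ) : ℝ) := by rw [← e2]; ring
      _ = _ := ih hk'

lemma poch_neg_nat (A : ℕ) {j : ℕ} (hj : j ≤ A) :
    poch (-(A:ℝ)) j * (((A-j).factorial : ℕ) : ℝ) = (-1)^j * ((A.factorial : ℕ) : ℝ) := by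
  rw [poch_neg, mul_assoc, ff_nat_eval A j hj]

lemma poch_asc (s : ℕ) : ∀ k, poch ((s:ℝ)+1) k * ((s.factorial : ℕ) : ℝ)
    = (((s+k).factorial : ℕ) : ℝ) := by
  intro k
  induction k with
  | zero => simp [poch]
  | succ k ih =>
    rw [poch_succ]
    have e : (s:ℝ) + 1 + k = (((s+k)+1 : ℕ) : ℝ) := by push_cast; ring
    calc poch ((s:ℝ)+1) k * ((s:ℝ)+1+k) * ((s.factorial : ℕ) : ℝ)
        = (poch ((s:ℝ)+1) k * ((s.factorial : ℕ) : ℝ)) * ((s:ℝ)+1+k) := by ring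
      _ = (((s+k).factorial : ℕ) : ℝ) * ((s:ℝ)+1+k) := by rw [ih]
      _ = _ := by
          rw [e, show s+(k+1) = (s+k)+1 from by omega, Nat.factorial_succ]
          push_cast
          ring

lemma ff_cast_zero {x j : ℕ} (hx : x < j) : ff ((x:ℕ):ℝ) j = 0 := by
  rw [ff]
  apply Finset.prod_eq_zero (Finset.mem_range.mpr hx)
  simp

lemma lam_inj (α β N : ℕ) {a b : ℕ} (ha : a ≤ N) (hb : b ≤ N) (hab : a ≠ b) :
    lam α β N a ≠ lam α β N b := by
  intro h
  have h0 : ((a:ℝ) - b) * ((a:ℝ) + b - hC α β N) = 0 := by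
    unfold lam at h
    unfold hC
    unfold hC at h
    nlinarith [h]
  rcases mul_eq_zero.mp h0 with h1 | h1
  · exact hab (by exact_mod_cast sub_eq_zero.mp h1)
  · have haN : (a:ℝ) ≤ N := by exact_mod_cast ha
    have hbN : (b:ℝ) ≤ N := by exact_mod_cast hb
    have hb0 : (0:ℝ) ≤ α := by positivity
    have hb1 : (0:ℝ) ≤ β := by positivity
    unfold hC at h1
    nlinarith

lemma hahnD2_pos (α β N n : ℕ) (hn : n ≤ N) : 0 < hahnD2 α β N n := by
  unfold hahnD2
  apply div_pos
  · rw [poch]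
    apply Finset.prod_pos
    intro i _
    have : (n:ℝ) ≤ N := by exact_mod_cast hn
    have h0 : (0:ℝ) ≤ α := by positivity
    have h1 : (0:ℝ) ≤ β := by positivity
    have h2 : (0:ℝ) ≤ i := by positivity
    linarith
  · have : (n:ℝ) ≤ N := by exact_mod_cast hn
    have h0 : (0:ℝ) ≤ α := by positivity
    have h1 : (0:ℝ) ≤ β := by positivity
    have f1 : (0:ℝ) < (Nat.factorial n : ℝ) := by exact_mod_cast n.factorial_pos
    have f2 : (0:ℝ) < (Nat.factorial (β+N-n) : ℝ) := by exact_mod_cast (β+N-n).factorial_pos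
    have f3 : (0:ℝ) < (Nat.factorial (α+N-n) : ℝ) := by exact_mod_cast (α+N-n).factorial_pos
    have f4 : (0:ℝ) < (Nat.factorial (N-n) : ℝ) := by exact_mod_cast (N-n).factorial_pos
    have : (0:ℝ) < (α : ℝ) + β + 2*N + 1 - 2*n := by linarith
    positivity


lemma Urel (α β N n k : ℕ) (hn : n ≤ N) :
    (lam α β N n - lam α β N k) *
        ∑ x ∈ Finset.range (N+1), ff (x:ℝ) k * PP α β N n x * hahnWeight α β N x
      = Bco β N k *
        ∑ x ∈ Finset.range (N+1), ff (x:ℝ) (k-1) * PP α β N n x * hahnWeight α β N x := by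
  have hs := selfadj α β N (fun t => ff t k) (PP α β N n)
  have hL : ∑ x ∈ Finset.range (N+1), hahnWeight α β N x *
        (hsig α x * ff ((x:ℝ)-1) k + htau β N x * ff ((x:ℝ)+1) k
          - (hsig α x + htau β N x) * ff (x:ℝ) k) * PP α β N n x
      = lam α β N k * (∑ x ∈ Finset.range (N+1), ff (x:ℝ) k * PP α β N n x * hahnWeight α β N x)
        + Bco β N k * ∑ x ∈ Finset.range (N+1), ff (x:ℝ) (k-1) * PP α β N n x * hahnWeight α β N x := by
    rw [Finset.mul_sum, Finset.mul_sum, ← Finset.sum_add_distrib]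
    refine Finset.sum_congr rfl fun x _ => ?_
    linear_combination (hahnWeight α β N x * PP α β N n x) * Lff α β N k (x:ℝ)
  have hR : ∑ x ∈ Finset.range (N+1), hahnWeight α β N x *
        (hsig α x * PP α β N n ((x:ℝ)-1) + htau β N x * PP α β N n ((x:ℝ)+1)
          - (hsig α x + htau β N x) * PP α β N n x) * ff (x:ℝ) k
      = lam α β N n * ∑ x ∈ Finset.range (N+1), ff (x:ℝ) k * PP α β N n x * hahnWeight α β N x := by
    rw [Finset.mul_sum]
    refine Finset.sum_congr rfl fun x _ => ?_
    linear_combination (hahnWeight α β N x * ff (x:ℝ) k) * eigenPP α β N n hn (x:ℝ)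
  linear_combination hL - hR - hs

lemma Uzero (α β N n : ℕ) (hn : n ≤ N) :
    ∀ k, k < n →
      (∑ x ∈ Finset.range (N+1), ff (x:ℝ) k * PP α β N n x * hahnWeight α β N x) = 0 := by
  intro k
  induction k with
  | zero =>
    intro h0
    have hrel := Urel α β N n 0 hn
    have hB : Bco β N 0 = 0 := by simp [Bco]
    rw [hB, zero_mul] at hrel
    have hne : lam α β N n - lam α β N 0 ≠ 0 :=
      sub_ne_zero.mpr (lam_inj α β N hn (Nat.zero_le N) (by omega))
    exact (mul_eq_zero.mp hrel).resolve_left hne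
  | succ k ih =>
    intro h
    have hrel := Urel α β N n (k+1) hn
    rw [Nat.add_sub_cancel, ih (by omega), mul_zero] at hrel
    have hne : lam α β N n - lam α β N (k+1) ≠ 0 :=
      sub_ne_zero.mpr (lam_inj α β N hn (by omega) (by omega))
    exact (mul_eq_zero.mp hrel).resolve_left hne

lemma Uchain (α β N n : ℕ) (hn : n ≤ N) : ∀ d j, j + d = N → n ≤ j →
    (∑ x ∈ Finset.range (N+1), ff (x:ℝ) j * PP α β N n x * hahnWeight α β N x)
        * ∏ k ∈ Finset.Ico (j+1) (N+1), Bco β N k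
      = (∑ x ∈ Finset.range (N+1), ff (x:ℝ) N * PP α β N n x * hahnWeight α β N x)
        * ∏ k ∈ Finset.Ico (j+1) (N+1), (lam α β N n - lam α β N k) := by
  intro d
  induction d with
  | zero =>
    intro j hj _
    have : j = N := by omega
    subst this
    simp
  | succ d ih =>
    intro j hj hnj
    have hi := ih (j+1) (by omega) (by omega)
    have hlt : j + 1 < N + 1 := by omega
    rw [Finset.prod_eq_prod_Ico_succ_bot hlt, Finset.prod_eq_prod_Ico_succ_bot hlt]
    have hrel := Urel α β N n (j+1) hn
    rw [Nat.add_sub_cancel] at hrel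
    set Uj := ∑ x ∈ Finset.range (N+1), ff (x:ℝ) j * PP α β N n x * hahnWeight α β N x
    set Uj1 := ∑ x ∈ Finset.range (N+1), ff (x:ℝ) (j+1) * PP α β N n x * hahnWeight α β N x
    set UN := ∑ x ∈ Finset.range (N+1), ff (x:ℝ) N * PP α β N n x * hahnWeight α β N x
    calc Uj * (Bco β N (j+1) * ∏ k ∈ Finset.Ico (j+1+1) (N+1), Bco β N k)
        = (Bco β N (j+1) * Uj) * ∏ k ∈ Finset.Ico (j+1+1) (N+1), Bco β N k := by ring
      _ = ((lam α β N n - lam α β N (j+1)) * Uj1)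
            * ∏ k ∈ Finset.Ico (j+1+1) (N+1), Bco β N k := by rw [← hrel]
      _ = (lam α β N n - lam α β N (j+1))
            * (Uj1 * ∏ k ∈ Finset.Ico (j+1+1) (N+1), Bco β N k) := by ring
      _ = (lam α β N n - lam α β N (j+1))
            * (UN * ∏ k ∈ Finset.Ico (j+1+1) (N+1), (lam α β N n - lam α β N k)) := by rw [hi]
      _ = _ := by ring

lemma UNeval (α β N n : ℕ) :
    (∑ x ∈ Finset.range (N+1), ff (x:ℝ) N * PP α β N n x * hahnWeight α β N x)
      = ff ((N:ℕ):ℝ) N * PP α β N n ((N:ℕ):ℝ) * hahnWeight α β N N := by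
  rw [Finset.sum_range_succ]
  rw [Finset.sum_eq_zero, zero_add]
  intro x hx
  rw [ff_cast_zero (Finset.mem_range.mp hx), zero_mul, zero_mul]

lemma PP_at_N (α β N n : ℕ) (hn : n ≤ N) :
    PP α β N n ((N:ℕ):ℝ) * poch (-(N:ℝ)-β) n = poch ((N:ℝ)+α+1-(n:ℝ)) n := by
  have h1 : PP α β N n ((N:ℕ):ℝ) = ∑ j ∈ Finset.range (n+1),
      (n.choose j : ℝ) * (-1)^j * poch ((n:ℝ)-2*N-α-β-1) j / poch (-(N:ℝ)-β) j := by
    unfold PP cf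
    refine Finset.sum_congr rfl fun j hj => ?_
    have hj' : j ≤ n := by simpa [Nat.lt_succ_iff] using hj
    have hQ2 : poch (-(N:ℝ)) j ≠ 0 := poch_neM_ne N (le_trans hj' hn)
    have hQ1 : poch (-(N:ℝ)-β) j ≠ 0 := poch_neB_ne N β (le_trans hj' hn)
    rw [ff_eq_poch_neg]
    field_simp
  rw [h1, chuV_div n _ _ (fun j hj => poch_neB_ne N β (le_trans hj hn)),
    div_mul_cancel₀ _ (poch_neB_ne N β hn)]
  congr 1
  ring

lemma normPP (α β N n : ℕ) (hn : n ≤ N) :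
    ∑ x ∈ Finset.range (N+1), PP α β N n x * PP α β N n x * hahnWeight α β N x
      = cf α β N n n *
        ∑ x ∈ Finset.range (N+1), ff (x:ℝ) n * PP α β N n x * hahnWeight α β N x := by
  have hx : ∀ x ∈ Finset.range (N+1),
      PP α β N n (x:ℝ) * PP α β N n x * hahnWeight α β N x
        = ∑ j ∈ Finset.range (n+1),
            cf α β N n j * (ff (x:ℝ) j * PP α β N n x * hahnWeight α β N x) := by
    intro x _
    nth_rewrite 1 [show PP α β N n (x:ℝ)
      = ∑ j ∈ Finset.range (n+1), cf α β N n j * ff (x:ℝ) j from rfl]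
    rw [Finset.sum_mul, Finset.sum_mul]
    exact Finset.sum_congr rfl fun j _ => by ring
  rw [Finset.sum_congr rfl hx, Finset.sum_comm]
  have h2 : ∀ j ∈ Finset.range (n+1),
      (∑ x ∈ Finset.range (N+1),
        cf α β N n j * (ff (x:ℝ) j * PP α β N n x * hahnWeight α β N x))
      = cf α β N n j *
        ∑ x ∈ Finset.range (N+1), ff (x:ℝ) j * PP α β N n x * hahnWeight α β N x :=
    fun j _ => (Finset.mul_sum _ _ _).symm
  rw [Finset.sum_congr rfl h2, Finset.sum_range_succ]
  rw [Finset.sum_eq_zero, zero_add]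
  intro j hj
  rw [Uzero α β N n hn j (Finset.mem_range.mp hj), mul_zero]


lemma prod_range_cast_factorial (M : ℕ) :
    (∏ i ∈ Finset.range M, ((i:ℝ)+1)) = ((M.factorial : ℕ) : ℝ) := by
  induction M with
  | zero => simp
  | succ M ih => rw [Finset.prod_range_succ, ih, Nat.factorial_succ]; push_cast; ring

-- evaluation of the eigenvalue product
lemma prodLam_eval (α β n M : ℕ) :
    (∏ k ∈ Finset.Ico (n+1) (n+M+1), (lam α β (n+M) n - lam α β (n+M) k))
      * (((M+α+β).factorial : ℕ) : ℝ)
    = ((M.factorial : ℕ) : ℝ) * (((2*M+α+β).factorial : ℕ) : ℝ) := by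
  rw [Finset.prod_Ico_eq_prod_range]
  rw [show n+M+1 - (n+1) = M from by omega]
  have step : ∀ i ∈ Finset.range M,
      lam α β (n+M) n - lam α β (n+M) (n+1+i)
        = ((i:ℝ)+1) * (((2*M+α+β:ℕ):ℝ) - i) := by
    intro i _
    unfold lam hC
    push_cast
    ring
  rw [Finset.prod_congr rfl step, Finset.prod_mul_distrib, prod_range_cast_factorial]
  have h2 : (∏ i ∈ Finset.range M, (((2*M+α+β:ℕ):ℝ) - i)) = ff ((2*M+α+β:ℕ):ℝ) M := rfl
  rw [h2, mul_assoc]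
  have h3 := ff_nat_eval (2*M+α+β) M (by omega)
  rw [show 2*M+α+β-M = M+α+β from by omega] at h3
  rw [h3]

-- evaluation of the B product
lemma prodB_eval (α β n M : ℕ) :
    (∏ k ∈ Finset.Ico (n+1) (n+M+1), Bco β (n+M) k)
      * (((n.factorial : ℕ) : ℝ) * ((β.factorial : ℕ) : ℝ))
    = (((n+M).factorial : ℕ) : ℝ) * ((M.factorial : ℕ) : ℝ) * (((M+β).factorial : ℕ) : ℝ) := by
  rw [Finset.prod_Ico_eq_prod_range]
  rw [show n+M+1 - (n+1) = M from by omega]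
  have step : ∀ i ∈ Finset.range M,
      Bco β (n+M) (n+1+i)
        = ((n:ℝ)+1+i) * ((((M:ℕ):ℝ) - i) * ((((M+β:ℕ)):ℝ) - i)) := by
    intro i _
    unfold Bco
    push_cast
    ring
  rw [Finset.prod_congr rfl step, Finset.prod_mul_distrib, Finset.prod_mul_distrib]
  have h1 : (∏ i ∈ Finset.range M, ((n:ℝ)+1+i)) = poch ((n:ℝ)+1) M := rfl
  have h2 : (∏ i ∈ Finset.range M, (((M:ℕ):ℝ) - i)) = ff ((M:ℕ):ℝ) M := rfl
  have h3 : (∏ i ∈ Finset.range M, ((((M+β:ℕ)):ℝ) - i)) = ff (((M+β:ℕ)):ℝ) M := rfl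
  rw [h1, h2, h3]
  have e1 := poch_asc n M
  have e2 := ff_nat_eval M M (le_refl M)
  rw [Nat.sub_self, Nat.factorial_zero] at e2
  have e3 := ff_nat_eval (M+β) M (by omega)
  rw [show M+β-M = β from by omega] at e3
  calc poch ((n:ℝ)+1) M * (ff ((M:ℕ):ℝ) M * ff (((M+β:ℕ)):ℝ) M)
      * (((n.factorial : ℕ) : ℝ) * ((β.factorial : ℕ) : ℝ))
      = (poch ((n:ℝ)+1) M * ((n.factorial : ℕ) : ℝ))
        * (ff ((M:ℕ):ℝ) M * ((1:ℕ):ℝ))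
        * (ff (((M+β:ℕ)):ℝ) M * ((β.factorial : ℕ) : ℝ)) := by push_cast; ring
    _ = _ := by rw [e1, e2, e3]


lemma hahnQ_eq (α β N n x : ℕ) :
    hahnQ α β N n x
      = poch (-(N : ℝ) - β) n * poch (-(N : ℝ)) n /
          (Real.sqrt (hahnD2 α β N n) * (Nat.factorial n : ℝ)) * PP α β N n (x:ℝ) := by
  unfold hahnQ PP cf
  congr 1
  refine Finset.sum_congr rfl fun j _ => ?_
  rw [ff_eq_poch_neg]
  ring

lemma PP_orth (α β N n m : ℕ) (hn : n ≤ N) (hm : m ≤ N) (hnm : n ≠ m) :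
    ∑ x ∈ Finset.range (N+1), PP α β N n x * PP α β N m x * hahnWeight α β N x = 0 := by
  have hs := selfadj α β N (PP α β N n) (PP α β N m)
  have hL : ∑ x ∈ Finset.range (N+1), hahnWeight α β N x *
        (hsig α x * PP α β N n ((x:ℝ)-1) + htau β N x * PP α β N n ((x:ℝ)+1)
          - (hsig α x + htau β N x) * PP α β N n x) * PP α β N m x
      = lam α β N n *
        ∑ x ∈ Finset.range (N+1), PP α β N n x * PP α β N m x * hahnWeight α β N x := by
    rw [Finset.mul_sum]
    refine Finset.sum_congr rfl fun x _ => ?_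
    linear_combination (hahnWeight α β N x * PP α β N m x) * eigenPP α β N n hn (x:ℝ)
  have hR : ∑ x ∈ Finset.range (N+1), hahnWeight α β N x *
        (hsig α x * PP α β N m ((x:ℝ)-1) + htau β N x * PP α β N m ((x:ℝ)+1)
          - (hsig α x + htau β N x) * PP α β N m x) * PP α β N n x
      = lam α β N m *
        ∑ x ∈ Finset.range (N+1), PP α β N n x * PP α β N m x * hahnWeight α β N x := by
    rw [Finset.mul_sum]
    refine Finset.sum_congr rfl fun x _ => ?_
    linear_combination (hahnWeight α β N x * PP α β N n x) * eigenPP α β N m hm (x:ℝ)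
  have hkey : (lam α β N n - lam α β N m) *
      ∑ x ∈ Finset.range (N+1), PP α β N n x * PP α β N m x * hahnWeight α β N x = 0 := by
    linear_combination hs - hL + hR
  exact (mul_eq_zero.mp hkey).resolve_left (sub_ne_zero.mpr (lam_inj α β N hn hm hnm))

/-- Orthonormality of the associated Hahn polynomials with respect to the
weight `w^{(α,β)}_N` on `{0,1,…,N}`. -/
theorem hahn_orthonormal (α β N n m : ℕ) (hN : 0 < N) (hn : n ≤ N) (hm : m ≤ N) :
    ∑ x ∈ Finset.range (N + 1), hahnQ α β N n x * hahnQ α β N m x * hahnWeight α β N x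
      = if n = m then 1 else 0 := by
  by_cases hnm : n = m
  · subst hnm
    rw [if_pos rfl]
    obtain ⟨M, rfl⟩ : ∃ M, N = n + M := ⟨N - n, by omega⟩
    have hnN : n ≤ n + M := by omega
    have step1 : ∑ x ∈ Finset.range (n+M+1),
        hahnQ α β (n+M) n x * hahnQ α β (n+M) n x * hahnWeight α β (n+M) x
        = (poch (-(↑(n+M) : ℝ) - β) n * poch (-(↑(n+M) : ℝ)) n /
            (Real.sqrt (hahnD2 α β (n+M) n) * (Nat.factorial n : ℝ)))^2 *
          ∑ x ∈ Finset.range (n+M+1),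
            PP α β (n+M) n x * PP α β (n+M) n x * hahnWeight α β (n+M) x := by
      rw [Finset.mul_sum]
      refine Finset.sum_congr rfl fun x _ => ?_
      rw [hahnQ_eq]
      ring
    rw [step1, normPP α β (n+M) n hnN]
    have hU0 := Uchain α β (n+M) n hnN M n rfl le_rfl
    rw [UNeval α β (n+M) n] at hU0
    have hPN := PP_at_N α β (n+M) n hnN
    -- nonzero facts
    have hfac : ∀ A : ℕ, ((A.factorial : ℕ) : ℝ) ≠ 0 := fun A =>
      Nat.cast_ne_zero.mpr A.factorial_ne_zero
    have hPB_mult := prodB_eval α β n M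
    have hPL_mult := prodLam_eval α β n M
    have hPB_ne : (∏ k ∈ Finset.Ico (n+1) (n+M+1), Bco β (n+M) k) ≠ 0 := by
      intro h
      rw [h, zero_mul] at hPB_mult
      have hpos : (0:ℝ) < (((n+M).factorial : ℕ) : ℝ) * ((M.factorial : ℕ) : ℝ) *
          (((M+β).factorial : ℕ) : ℝ) := by positivity
      rw [← hPB_mult] at hpos
      exact lt_irrefl 0 hpos
    have hq1_ne : poch (-(↑(n+M) : ℝ) - β) n ≠ 0 := poch_neB_ne (n+M) β hnN
    have hq1d : poch (-(↑(n+M) : ℝ) - β) n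
        = ((-1:ℝ)^n * (((n+M+β).factorial : ℕ) : ℝ)) / (((M+β).factorial : ℕ) : ℝ) := by
      rw [eq_div_iff (hfac (M+β))]
      rw [show (-(↑(n+M):ℝ) - ↑β) = -((n+M+β:ℕ):ℝ) from by push_cast; ring]
      have h := poch_neg_nat (n+M+β) (j := n) (by omega)
      rwa [show n+M+β-n = M+β from by omega] at h
    have hq2d : poch (-(↑(n+M) : ℝ)) n
        = ((-1:ℝ)^n * (((n+M).factorial : ℕ) : ℝ)) / ((M.factorial : ℕ) : ℝ) := by
      rw [eq_div_iff (hfac M)]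
      have h := poch_neg_nat (n+M) (j := n) (by omega)
      rwa [show n+M-n = M from by omega] at h
    have hp1d : poch ((n:ℝ) - 2 * ↑(n+M) - α - β - 1) n
        = ((-1:ℝ)^n * (((n+2*M+α+β+1).factorial : ℕ) : ℝ))
          / (((2*M+α+β+1 : ℕ) : ℝ) * (((2*M+α+β).factorial : ℕ) : ℝ)) := by
      have hne : (((2*M+α+β+1 : ℕ) : ℝ) * (((2*M+α+β).factorial : ℕ) : ℝ)) ≠ 0 :=
        mul_ne_zero (Nat.cast_ne_zero.mpr (by omega)) (hfac _)
      rw [eq_div_iff hne]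
      rw [show ((n:ℝ) - 2 * ↑(n+M) - α - β - 1) = -((n+2*M+α+β+1 : ℕ):ℝ) from by
        push_cast; ring]
      have h := poch_neg_nat (n+2*M+α+β+1) (j := n) (by omega)
      rw [show n+2*M+α+β+1-n = 2*M+α+β+1 from by omega] at h
      rw [show (2*M+α+β+1).factorial = (2*M+α+β+1) * (2*M+α+β).factorial from
        Nat.factorial_succ _] at h
      rw [← h]
      push_cast
      ring
    have hpAd : poch ((↑(n+M) : ℝ) + α + 1 - n) n
        = (((n+M+α).factorial : ℕ) : ℝ) / (((M+α).factorial : ℕ) : ℝ) := by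
      rw [eq_div_iff (hfac (M+α))]
      rw [show ((↑(n+M):ℝ) + α + 1 - n) = ((M+α:ℕ):ℝ) + 1 from by push_cast; ring]
      have h := poch_asc (M+α) n
      rwa [show M+α+n = n+M+α from by omega] at h
    have hpDd : poch ((α : ℝ) + β + ↑(n+M) + 1 - n) ((n+M) + 1)
        = (((n+2*M+α+β+1).factorial : ℕ) : ℝ) / (((M+α+β).factorial : ℕ) : ℝ) := by
      rw [eq_div_iff (hfac (M+α+β))]
      rw [show ((α:ℝ) + β + ↑(n+M) + 1 - n) = ((M+α+β:ℕ):ℝ) + 1 from by push_cast; ring]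
      have h := poch_asc (M+α+β) ((n+M)+1)
      rwa [show M+α+β+((n+M)+1) = n+2*M+α+β+1 from by omega] at h
    have hPLd : (∏ k ∈ Finset.Ico (n+1) (n+M+1), (lam α β (n+M) n - lam α β (n+M) k))
        = ((M.factorial : ℕ) : ℝ) * (((2*M+α+β).factorial : ℕ) : ℝ)
          / (((M+α+β).factorial : ℕ) : ℝ) := by
      rw [eq_div_iff (hfac (M+α+β))]; exact hPL_mult
    have hPBd : (∏ k ∈ Finset.Ico (n+1) (n+M+1), Bco β (n+M) k)
        = (((n+M).factorial : ℕ) : ℝ) * ((M.factorial : ℕ) : ℝ) * (((M+β).factorial : ℕ) : ℝ)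
          / (((n.factorial : ℕ) : ℝ) * ((β.factorial : ℕ) : ℝ)) := by
      rw [eq_div_iff (mul_ne_zero (hfac n) (hfac β))]; exact hPB_mult
    have hffNd : ff (((n+M) : ℕ) : ℝ) (n+M) = (((n+M).factorial : ℕ) : ℝ) := by
      have h := ff_nat_eval (n+M) (n+M) le_rfl
      rwa [Nat.sub_self, Nat.factorial_zero, Nat.cast_one, mul_one] at h
    have hwNd : hahnWeight α β (n+M) (n+M)
        = ((((n+M).factorial * (n+M+α).factorial * β.factorial * 1 : ℕ)) : ℝ)⁻¹ := by
      unfold hahnWeight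
      rw [show (n+M)+β-(n+M) = β from by omega, show (n+M)-(n+M) = 0 from by omega,
        Nat.factorial_zero]
    set U := ∑ x ∈ Finset.range (n+M+1),
        ff (x:ℝ) n * PP α β (n+M) n x * hahnWeight α β (n+M) x with hU
    set PB := ∏ k ∈ Finset.Ico (n+1) (n+M+1), Bco β (n+M) k with hPB
    set PL := ∏ k ∈ Finset.Ico (n+1) (n+M+1),
        (lam α β (n+M) n - lam α β (n+M) k) with hPL
    set KK := (poch (-(↑(n+M) : ℝ) - β) n * poch (-(↑(n+M) : ℝ)) n /
        (Real.sqrt (hahnD2 α β (n+M) n) * (Nat.factorial n : ℝ)))^2 with hKK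
    apply mul_right_cancel₀ (mul_ne_zero hPB_ne hq1_ne)
    calc KK * (cf α β (n+M) n n * U) * (PB * poch (-(↑(n+M) : ℝ) - β) n)
        = KK * cf α β (n+M) n n * poch (-(↑(n+M) : ℝ) - β) n * (U * PB) := by ring
      _ = KK * cf α β (n+M) n n * poch (-(↑(n+M) : ℝ) - β) n *
            (ff (((n+M) : ℕ) : ℝ) (n+M) * PP α β (n+M) n (((n+M) : ℕ) : ℝ) *
              hahnWeight α β (n+M) (n+M) * PL) := by rw [hU0]
      _ = KK * cf α β (n+M) n n *
            (ff (((n+M) : ℕ) : ℝ) (n+M) * hahnWeight α β (n+M) (n+M) * PL) *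
            (PP α β (n+M) n (((n+M) : ℕ) : ℝ) * poch (-(↑(n+M) : ℝ) - β) n) := by ring
      _ = KK * cf α β (n+M) n n *
            (ff (((n+M) : ℕ) : ℝ) (n+M) * hahnWeight α β (n+M) (n+M) * PL) *
            poch ((↑(n+M) : ℝ) + α + 1 - n) n := by rw [hPN]
      _ = 1 * (PB * poch (-(↑(n+M) : ℝ) - β) n) := by
          rw [hKK, div_pow, mul_pow, mul_pow, Real.sq_sqrt (hahnD2_pos α β (n+M) n hnN).le]
          unfold hahnD2 cf
          rw [Nat.choose_self]
          rw [show β+(n+M)-n = M+β from by omega, show α+(n+M)-n = M+α from by omega,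
            show (n+M)-n = M from by omega]
          rw [hpDd, hq1d, hq2d, hp1d, hpAd, hPLd, hPBd, hffNd, hwNd]
          push_cast
          obtain hsg | hsg := neg_one_pow_eq_or ℝ n <;> rw [hsg] <;> field_simp <;> ring
  · rw [if_neg hnm]
    have h2 : ∑ x ∈ Finset.range (N+1),
        hahnQ α β N n x * hahnQ α β N m x * hahnWeight α β N x
        = (poch (-(N : ℝ) - β) n * poch (-(N : ℝ)) n /
            (Real.sqrt (hahnD2 α β N n) * (Nat.factorial n : ℝ)))
          * (poch (-(N : ℝ) - β) m * poch (-(N : ℝ)) m /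
            (Real.sqrt (hahnD2 α β N m) * (Nat.factorial m : ℝ)))
          * ∑ x ∈ Finset.range (N+1),
              PP α β N n x * PP α β N m x * hahnWeight α β N x := by
      rw [Finset.mul_sum]
      refine Finset.sum_congr rfl fun x _ => ?_
      rw [hahnQ_eq, hahnQ_eq]
      ring
    rw [h2, PP_orth α β N n m hn hm hnm, mul_zero]
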